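/- arXiv:1609.03511 — 3 statements merged into one kernel-verified Lean document; each statement's English description precedes it below -/
import Mathlib

section
/- Let k be a positive integer, let c₁, c₂ ∈ (0,∞)^k with c₁ ≠ c₂, and let p₁, p₂ > 0. Then there are a constant c > 0 and N such that for all n ≥ N, ∑_{x ∈ ℤ₊^k} min{𝒫_{ln(n)·c₁}(x)·p₁, 𝒫_{ln(n)·c₂}(x)·p₂} ≥ c · n^{−D₊(c₁,c₂)} · (ln n)^{−k/2}. -/
open scoped BigOperators

/-- The multivariate Poisson probability mass function with mean vector `lam`. -/
noncomputable def mvPoisson {k : ℕ} (lam : Fin k → ℝ) (x : Fin k → ℕ) : ℝ :=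
  ∏ i, lam i ^ (x i) * Real.exp (-lam i) / (Nat.factorial (x i) : ℝ)

/-- The Chernoff–Hellinger divergence
`D₊(c₁,c₂) = max_{t∈[0,1]} ∑ᵢ (t c₁(i) + (1-t) c₂(i) - c₁(i)^t c₂(i)^{1-t})`. -/
noncomputable def Dplus {k : ℕ} (c₁ c₂ : Fin k → ℝ) : ℝ :=
  sSup ((fun t : ℝ => ∑ i, (t * c₁ i + (1 - t) * c₂ i - c₁ i ^ t * c₂ i ^ (1 - t))) ''
    Set.Icc (0 : ℝ) 1)

lemma factorial_le_stirling' (m : ℕ) (hm : 1 ≤ m) :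
    (Nat.factorial m : ℝ) ≤ Real.exp 1 * Real.sqrt m * ((m : ℝ) / Real.exp 1) ^ m := by
  obtain ⟨n, rfl⟩ := Nat.exists_eq_add_of_le hm
  have hmono := Stirling.log_stirlingSeq'_antitone (Nat.zero_le n)
  simp only [Function.comp] at hmono
  have h1 : Stirling.stirlingSeq (n + 1) ≤ Stirling.stirlingSeq 1 := by
    have hp := Stirling.stirlingSeq'_pos n
    have hp1 := Stirling.stirlingSeq'_pos 0
    rw [← Real.log_le_log_iff hp hp1]
    simpa [Nat.succ_eq_add_one] using hmono
  set m := 1 + n with hmdef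
  have hm1 : m = n + 1 := by omega
  have hmR : (0:ℝ) < m := by positivity
  have hden : (0:ℝ) < Real.sqrt (2 * m) * ((m : ℝ) / Real.exp 1) ^ m := by
    have : (0:ℝ) < (m : ℝ) / Real.exp 1 := by positivity
    positivity
  have hfact : (Nat.factorial m : ℝ) = Stirling.stirlingSeq m * (Real.sqrt (2 * m) * ((m : ℝ) / Real.exp 1) ^ m) := by
    rw [Stirling.stirlingSeq, div_mul_cancel₀ _ hden.ne']
  rw [hfact]
  have h2 : Stirling.stirlingSeq m ≤ Real.exp 1 / Real.sqrt 2 := by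
    rw [hm1]; simpa using h1
  calc Stirling.stirlingSeq m * (Real.sqrt (2 * m) * ((m : ℝ) / Real.exp 1) ^ m)
      ≤ (Real.exp 1 / Real.sqrt 2) * (Real.sqrt (2 * m) * ((m : ℝ) / Real.exp 1) ^ m) := by
        apply mul_le_mul_of_nonneg_right h2 hden.le
    _ = Real.exp 1 * Real.sqrt m * ((m : ℝ) / Real.exp 1) ^ m := by
        rw [show (2 * (m:ℝ)) = 2 * m by ring, Real.sqrt_mul (by norm_num : (0:ℝ) ≤ 2)]
        have h2' : Real.sqrt 2 ≠ 0 := by positivity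
        field_simp

set_option maxHeartbeats 1000000 in
lemma summable_pi_prod (k : ℕ) (g : Fin k → ℕ → ℝ) (hs : ∀ i, Summable (g i))
    (hnn : ∀ i x, 0 ≤ g i x) : Summable (fun x : Fin k → ℕ => ∏ i, g i (x i)) := by
  induction k with
  | zero =>
      simp only [Finset.univ_eq_empty, Finset.prod_empty]
      exact Summable.of_finite
  | succ k ih =>
      have ihk := ih (fun i => g i.succ) (fun i => hs i.succ) (fun i x => hnn i.succ x)
      have hF : Summable (fun p : ℕ × (Fin k → ℕ) => g 0 p.1 * ∏ i, g i.succ (p.2 i)) := by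
        apply Summable.mul_of_nonneg (hs 0) ihk
        · exact fun x => hnn 0 x
        · exact fun x => Finset.prod_nonneg fun i _ => hnn i.succ (x i)
      have h2 := (Fin.consEquiv fun _ => ℕ).symm.summable_iff.2 hF
      refine h2.congr fun x => ?_
      simp only [Function.comp, Fin.consEquiv_symm_apply]
      rw [Fin.prod_univ_succ]
      rfl

lemma coord_lb (c lam : ℝ) (hc : 0 < c) (hlam : 0 < lam) :
    ∃ A : ℝ, 0 < A ∧ ∃ L₀ : ℝ, 1 ≤ L₀ ∧ ∀ L : ℝ, L₀ ≤ L →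
      A * Real.exp (-(L * (c - lam + lam * (Real.log lam - Real.log c)))) / Real.sqrt L
        ≤ (L * c) ^ ⌊L * lam⌋₊ * Real.exp (-(L * c)) / (Nat.factorial ⌊L * lam⌋₊ : ℝ) := by
  refine ⟨Real.exp (-|Real.log lam - Real.log c - 1|) / (Real.exp 1 * Real.sqrt lam),
    by positivity, max 1 (2 / lam), le_max_left _ _, fun L hL => ?_⟩
  have hL1 : (1:ℝ) ≤ L := le_trans (le_max_left _ _) hL
  have hLpos : (0:ℝ) < L := lt_of_lt_of_le zero_lt_one hL1
  have hx2 : (2:ℝ) ≤ L * lam := by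
    have h2 : 2 / lam ≤ L := le_trans (le_max_right _ _) hL
    calc (2:ℝ) = (2 / lam) * lam := by field_simp
      _ ≤ L * lam := mul_le_mul_of_nonneg_right h2 hlam.le
  set m := ⌊L * lam⌋₊ with hmdef
  have hxpos : (0:ℝ) < L * lam := by positivity
  have hm1 : 1 ≤ m := Nat.le_floor (by exact_mod_cast le_trans one_le_two hx2)
  have hmR1 : (1:ℝ) ≤ (m:ℝ) := by exact_mod_cast hm1
  have hmpos : (0:ℝ) < (m:ℝ) := lt_of_lt_of_le zero_lt_one hmR1
  have hmle : (m:ℝ) ≤ L * lam := Nat.floor_le hxpos.le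
  have hmgt : L * lam - 1 ≤ (m:ℝ) := (Nat.sub_one_lt_floor _).le
  have hμpos : (0:ℝ) < L * c := by positivity
  have hd : Real.log (L * lam) - Real.log (L * c) = Real.log lam - Real.log c := by
    rw [Real.log_mul hLpos.ne' hlam.ne', Real.log_mul hLpos.ne' hc.ne']; ring
  -- exponent inequality
  have hLK : L * (c - lam + lam * (Real.log lam - Real.log c))
      = (L * lam) * Real.log (L * lam) - (L * lam) * Real.log (L * c) - (L * lam) + L * c := by
    linear_combination (-(L * lam)) * hd
  have hexp : (m:ℝ) * Real.log m - (m:ℝ) * Real.log (L * c) - (m:ℝ) + L * c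
      ≤ L * (c - lam + lam * (Real.log lam - Real.log c)) + |Real.log lam - Real.log c - 1| := by
    have hlog : Real.log m ≤ Real.log (L * lam) := Real.log_le_log hmpos hmle
    have h1 : (m:ℝ) * (Real.log m - Real.log (L * lam)) ≤ 0 :=
      mul_nonpos_iff.mpr (Or.inl ⟨by linarith, by linarith⟩)
    have h2 : ((m:ℝ) - L * lam) * (Real.log lam - Real.log c - 1)
        ≤ |Real.log lam - Real.log c - 1| := by
      have habs : |(m:ℝ) - L * lam| ≤ 1 := abs_le.mpr ⟨by linarith, by linarith⟩
      calc ((m:ℝ) - L * lam) * (Real.log lam - Real.log c - 1)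
          ≤ |((m:ℝ) - L * lam) * (Real.log lam - Real.log c - 1)| := le_abs_self _
        _ = |(m:ℝ) - L * lam| * |Real.log lam - Real.log c - 1| := abs_mul _ _
        _ ≤ 1 * |Real.log lam - Real.log c - 1| :=
            mul_le_mul_of_nonneg_right habs (abs_nonneg _)
        _ = |Real.log lam - Real.log c - 1| := one_mul _
    have hiden : (m:ℝ) * Real.log m - (m:ℝ) * Real.log (L * c) - (m:ℝ) + L * c
        - (L * (c - lam + lam * (Real.log lam - Real.log c)))
        = (m:ℝ) * (Real.log m - Real.log (L * lam))
          + ((m:ℝ) - L * lam) * (Real.log lam - Real.log c - 1) := by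
      linear_combination hLK + ((m:ℝ) + L * lam) * hd
    linarith
  -- assembling
  have hfac : (Nat.factorial m : ℝ) ≤ Real.exp 1 * Real.sqrt m * ((m:ℝ) / Real.exp 1) ^ m :=
    factorial_le_stirling' m hm1
  have hfacpos : (0:ℝ) < (Nat.factorial m : ℝ) := by exact_mod_cast m.factorial_pos
  have hμm : Real.exp ((m:ℝ) * Real.log (L * c)) = (L * c) ^ m := by
    rw [Real.exp_nat_mul, Real.exp_log hμpos]
  have hme : Real.exp ((m:ℝ) * (Real.log m - 1)) = ((m:ℝ) / Real.exp 1) ^ m := by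
    rw [Real.exp_nat_mul, Real.exp_sub, Real.exp_log hmpos]
  have hsqrtm : Real.sqrt m ≤ Real.sqrt lam * Real.sqrt L := by
    rw [← Real.sqrt_mul hlam.le]
    exact Real.sqrt_le_sqrt (by linarith)
  have hsm : (0:ℝ) < Real.sqrt m := Real.sqrt_pos.mpr hmpos
  calc Real.exp (-|Real.log lam - Real.log c - 1|) / (Real.exp 1 * Real.sqrt lam)
        * Real.exp (-(L * (c - lam + lam * (Real.log lam - Real.log c)))) / Real.sqrt L
      = Real.exp (-(L * (c - lam + lam * (Real.log lam - Real.log c)))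
          - |Real.log lam - Real.log c - 1|) / (Real.exp 1 * (Real.sqrt lam * Real.sqrt L)) := by
        rw [Real.exp_sub, Real.exp_neg]
        have e1 : Real.exp 1 ≠ 0 := (Real.exp_pos 1).ne'
        have e2 : Real.sqrt lam ≠ 0 := (Real.sqrt_pos.mpr hlam).ne'
        have e3 : Real.sqrt L ≠ 0 := (Real.sqrt_pos.mpr hLpos).ne'
        have e4 : Real.exp |Real.log lam - Real.log c - 1| ≠ 0 := (Real.exp_pos _).ne'
        field_simp
    _ ≤ Real.exp (-(L * (c - lam + lam * (Real.log lam - Real.log c)))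
          - |Real.log lam - Real.log c - 1|) / (Real.exp 1 * Real.sqrt m) := by
        gcongr
    _ ≤ Real.exp ((m:ℝ) * Real.log (L * c) - (L * c) - ((m:ℝ) * (Real.log m - 1)))
          / (Real.exp 1 * Real.sqrt m) := by
        apply div_le_div_of_nonneg_right ?_ (by positivity)
        exact Real.exp_le_exp.mpr (by linarith)
    _ = Real.exp ((m:ℝ) * Real.log (L * c)) * Real.exp (-(L * c))
          / (Real.exp 1 * Real.sqrt m * Real.exp ((m:ℝ) * (Real.log m - 1))) := by
        rw [show (m:ℝ) * Real.log (L * c) - (L * c) - ((m:ℝ) * (Real.log m - 1))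
            = ((m:ℝ) * Real.log (L * c) + (-(L * c))) - ((m:ℝ) * (Real.log m - 1)) by ring,
          Real.exp_sub, Real.exp_add, div_div, mul_comm (Real.exp ((m:ℝ) * (Real.log m - 1)))]
    _ = (L * c) ^ m * Real.exp (-(L * c))
          / (Real.exp 1 * Real.sqrt m * (((m:ℝ) / Real.exp 1) ^ m)) := by
        rw [hμm, hme]
    _ ≤ (L * c) ^ m * Real.exp (-(L * c)) / (Nat.factorial m : ℝ) := by
        gcongr

lemma aux_nonneg {a b : ℝ} (ha : 0 < a) (hb : 0 < b) :
    0 ≤ a - b - b * (Real.log a - Real.log b) := by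
  have hab : 0 < a / b := by positivity
  have h3 : b * Real.log (a / b) ≤ b * (a / b - 1) :=
    mul_le_mul_of_nonneg_left (Real.log_le_sub_one_of_pos hab) hb.le
  have h4 : b * (a / b - 1) = a - b := by field_simp
  rw [Real.log_div ha.ne' hb.ne'] at h3
  linarith

lemma aux_pos {a b : ℝ} (ha : 0 < a) (hb : 0 < b) (hab : a ≠ b) :
    0 < a - b - b * (Real.log a - Real.log b) := by
  have hab0 : 0 < a / b := by positivity
  have hab1 : a / b ≠ 1 := by
    intro h
    exact hab ((div_eq_one_iff_eq hb.ne').1 h)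
  have h3 : b * Real.log (a / b) < b * (a / b - 1) :=
    (mul_lt_mul_iff_right₀ hb).2 (Real.log_lt_sub_one_of_pos hab0 hab1)
  have h4 : b * (a / b - 1) = a - b := by field_simp
  rw [Real.log_div ha.ne' hb.ne'] at h3
  linarith

/-- Lower bound on the total overlap of two multivariate Poisson distributions with
mean vectors `ln(n)·c₁` and `ln(n)·c₂`:
`∑_x min{𝒫_{ln(n)c₁}(x) p₁, 𝒫_{ln(n)c₂}(x) p₂} ≥ c n^{-D₊(c₁,c₂)} (ln n)^{-k/2}`
for all sufficiently large `n`. -/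
theorem poisson_overlap_lower_bound (k : ℕ) (hk : 0 < k) (c₁ c₂ : Fin k → ℝ)
    (hc₁ : ∀ i, 0 < c₁ i) (hc₂ : ∀ i, 0 < c₂ i) (hne : c₁ ≠ c₂)
    (p₁ p₂ : ℝ) (hp₁ : 0 < p₁) (hp₂ : 0 < p₂) :
    ∃ c : ℝ, 0 < c ∧ ∃ N : ℕ, ∀ n : ℕ, N ≤ n →
      c * (n : ℝ) ^ (-(Dplus c₁ c₂)) * Real.log n ^ (-(k : ℝ)/2)
        ≤ ∑' x : Fin k → ℕ,
            min (mvPoisson (fun i => Real.log n * c₁ i) x * p₁)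
                (mvPoisson (fun i => Real.log n * c₂ i) x * p₂) := by

  classical
  obtain ⟨i₀, hi₀⟩ : ∃ i, c₁ i ≠ c₂ i := by
    by_contra h; push_neg at h; exact hne (funext h)
  -- continuity of t ↦ a ^ t
  have hrp : ∀ a : ℝ, 0 < a → Continuous fun t : ℝ => a ^ t := by
    intro a ha
    have h : (fun t : ℝ => a ^ t) = fun t => Real.exp (Real.log a * t) := by
      funext t; rw [Real.rpow_def_of_pos ha]
    rw [h]; exact Real.continuous_exp.comp (continuous_const.mul continuous_id)
  have hprod : ∀ i : Fin k, Continuous fun t : ℝ => c₁ i ^ t * c₂ i ^ (1 - t) := fun i =>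
    (hrp _ (hc₁ i)).mul ((hrp _ (hc₂ i)).comp (continuous_const.sub continuous_id))
  -- intermediate value: find t₀
  obtain ⟨t₀, ht₀mem, ht₀⟩ : ∃ t₀ ∈ Set.Icc (0:ℝ) 1,
      ∑ i, (c₁ i - c₂ i - c₁ i ^ t₀ * c₂ i ^ (1 - t₀) * (Real.log (c₁ i) - Real.log (c₂ i)))
        = 0 := by
    set S : ℝ → ℝ := fun t =>
      ∑ i, (c₁ i - c₂ i - c₁ i ^ t * c₂ i ^ (1 - t) * (Real.log (c₁ i) - Real.log (c₂ i)))
      with hSdef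
    have hScont : Continuous S := by
      apply continuous_finset_sum; intro i _
      exact continuous_const.sub ((hprod i).mul continuous_const)
    have hS0 : 0 < S 0 := by
      rw [hSdef]
      simp only [Real.rpow_zero, one_mul, sub_zero, Real.rpow_one]
      refine Finset.sum_pos' (fun i _ => aux_nonneg (hc₁ i) (hc₂ i))
        ⟨i₀, Finset.mem_univ _, aux_pos (hc₁ i₀) (hc₂ i₀) hi₀⟩
    have hS1 : S 1 < 0 := by
      rw [hSdef]
      simp only [Real.rpow_one, sub_self, Real.rpow_zero, mul_one]
      have he : ∀ i : Fin k, c₁ i - c₂ i - c₁ i * (Real.log (c₁ i) - Real.log (c₂ i))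
          = -(c₂ i - c₁ i - c₁ i * (Real.log (c₂ i) - Real.log (c₁ i))) := fun i => by ring
      rw [Finset.sum_congr rfl fun i _ => he i, Finset.sum_neg_distrib, neg_lt, neg_zero]
      refine Finset.sum_pos' (fun i _ => aux_nonneg (hc₂ i) (hc₁ i))
        ⟨i₀, Finset.mem_univ _, aux_pos (hc₂ i₀) (hc₁ i₀) (Ne.symm hi₀)⟩
    have h01 : (0:ℝ) ∈ Set.Icc (S 1) (S 0) := ⟨hS1.le, hS0.le⟩
    obtain ⟨t₀, ht₀mem, h⟩ := intermediate_value_Icc' zero_le_one hScont.continuousOn h01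
    exact ⟨t₀, ht₀mem, h⟩
  -- the tilted mean
  set lam : Fin k → ℝ := fun i => c₁ i ^ t₀ * c₂ i ^ (1 - t₀) with hlamdef
  have hlam : ∀ i, 0 < lam i := fun i =>
    mul_pos (Real.rpow_pos_of_pos (hc₁ i) _) (Real.rpow_pos_of_pos (hc₂ i) _)
  have hloglam : ∀ i, Real.log (lam i)
      = t₀ * Real.log (c₁ i) + (1 - t₀) * Real.log (c₂ i) := by
    intro i
    rw [hlamdef]
    simp only
    rw [Real.log_mul (Real.rpow_pos_of_pos (hc₁ i) _).ne' (Real.rpow_pos_of_pos (hc₂ i) _).ne',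
      Real.log_rpow (hc₁ i), Real.log_rpow (hc₂ i)]
  have hKey : ∑ i, (c₁ i - c₂ i - lam i * (Real.log (c₁ i) - Real.log (c₂ i))) = 0 := by
    simpa only [hlamdef] using ht₀
  -- g t₀ ≤ Dplus
  have hgle : (∑ i, (t₀ * c₁ i + (1 - t₀) * c₂ i - lam i)) ≤ Dplus c₁ c₂ := by
    rw [Dplus]
    apply le_csSup
    · refine IsCompact.bddAbove (IsCompact.image isCompact_Icc ?_)
      apply continuous_finset_sum; intro i _
      exact ((continuous_id.mul continuous_const).add
        ((continuous_const.sub continuous_id).mul continuous_const)).sub (hprod i)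
    · exact ⟨t₀, ht₀mem, by simp only [hlamdef]⟩
  -- KL divergences bounded by Dplus
  have hKL₁ : ∑ i, (c₁ i - lam i + lam i * (Real.log (lam i) - Real.log (c₁ i)))
      ≤ Dplus c₁ c₂ := by
    refine le_trans (le_of_eq ?_) hgle
    rw [show (∑ i, (t₀ * c₁ i + (1 - t₀) * c₂ i - lam i))
        = (∑ i, (t₀ * c₁ i + (1 - t₀) * c₂ i - lam i)) + (1 - t₀) * 0 by ring, ← hKey,
      Finset.mul_sum, ← Finset.sum_add_distrib]
    refine Finset.sum_congr rfl fun i _ => ?_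
    rw [hloglam i]; ring
  have hKL₂ : ∑ i, (c₂ i - lam i + lam i * (Real.log (lam i) - Real.log (c₂ i)))
      ≤ Dplus c₁ c₂ := by
    refine le_trans (le_of_eq ?_) hgle
    rw [show (∑ i, (t₀ * c₁ i + (1 - t₀) * c₂ i - lam i))
        = (∑ i, (t₀ * c₁ i + (1 - t₀) * c₂ i - lam i)) + (-t₀) * 0 by ring, ← hKey,
      Finset.mul_sum, ← Finset.sum_add_distrib]
    refine Finset.sum_congr rfl fun i _ => ?_
    rw [hloglam i]; ring
  -- choose per-coordinate constants
  choose A₁ hA₁ L₁ hL₁one hbd₁ using fun i => coord_lb (c₁ i) (lam i) (hc₁ i) (hlam i)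
  choose A₂ hA₂ L₂ hL₂one hbd₂ using fun i => coord_lb (c₂ i) (lam i) (hc₂ i) (hlam i)
  set M : ℝ := 1 + (∑ i, |L₁ i|) + (∑ i, |L₂ i|) with hMdef
  have hM1 : (1:ℝ) ≤ M := by
    have h1 : 0 ≤ ∑ i, |L₁ i| := Finset.sum_nonneg fun i _ => abs_nonneg _
    have h2 : 0 ≤ ∑ i, |L₂ i| := Finset.sum_nonneg fun i _ => abs_nonneg _
    rw [hMdef]; linarith
  have hML₁ : ∀ i, L₁ i ≤ M := by
    intro i
    have h1 : |L₁ i| ≤ ∑ j, |L₁ j| :=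
      Finset.single_le_sum (fun j _ => abs_nonneg (L₁ j)) (Finset.mem_univ i)
    have h2 : 0 ≤ ∑ i, |L₂ i| := Finset.sum_nonneg fun i _ => abs_nonneg _
    have := le_abs_self (L₁ i)
    rw [hMdef]; linarith
  have hML₂ : ∀ i, L₂ i ≤ M := by
    intro i
    have h1 : |L₂ i| ≤ ∑ j, |L₂ j| :=
      Finset.single_le_sum (fun j _ => abs_nonneg (L₂ j)) (Finset.mem_univ i)
    have h2 : 0 ≤ ∑ i, |L₁ i| := Finset.sum_nonneg fun i _ => abs_nonneg _
    have := le_abs_self (L₂ i)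
    rw [hMdef]; linarith
  have hprodA₁ : 0 < ∏ i, A₁ i := Finset.prod_pos fun i _ => hA₁ i
  have hprodA₂ : 0 < ∏ i, A₂ i := Finset.prod_pos fun i _ => hA₂ i
  refine ⟨min p₁ p₂ * min (∏ i, A₁ i) (∏ i, A₂ i),
    mul_pos (lt_min hp₁ hp₂) (lt_min hprodA₁ hprodA₂), ⌈Real.exp M⌉₊, fun n hn => ?_⟩
  have hnR : Real.exp M ≤ (n:ℝ) := le_trans (Nat.le_ceil _) (by exact_mod_cast hn)
  have hnpos : (0:ℝ) < n := lt_of_lt_of_le (Real.exp_pos M) hnR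
  set L : ℝ := Real.log n with hLdef
  have hL : M ≤ L := by
    rw [hLdef, ← Real.log_exp M]
    exact Real.log_le_log (Real.exp_pos M) hnR
  have hL1 : (1:ℝ) ≤ L := le_trans hM1 hL
  have hLpos : (0:ℝ) < L := lt_of_lt_of_le zero_lt_one hL1
  -- the distinguished point
  set mf : Fin k → ℕ := fun i => ⌊L * lam i⌋₊ with hmfdef
  have hb₁ : ∀ i, A₁ i * Real.exp (-(L * (c₁ i - lam i
        + lam i * (Real.log (lam i) - Real.log (c₁ i))))) / Real.sqrt L
      ≤ (L * c₁ i) ^ (mf i) * Real.exp (-(L * c₁ i)) / (Nat.factorial (mf i) : ℝ) :=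
    fun i => hbd₁ i L (le_trans (hML₁ i) hL)
  have hb₂ : ∀ i, A₂ i * Real.exp (-(L * (c₂ i - lam i
        + lam i * (Real.log (lam i) - Real.log (c₂ i))))) / Real.sqrt L
      ≤ (L * c₂ i) ^ (mf i) * Real.exp (-(L * c₂ i)) / (Nat.factorial (mf i) : ℝ) :=
    fun i => hbd₂ i L (le_trans (hML₂ i) hL)
  -- main product lower bound
  have hsqk : Real.sqrt L ^ k = L ^ ((k:ℝ)/2) := by
    rw [Real.sqrt_eq_rpow, ← Real.rpow_natCast (L ^ ((1:ℝ)/2)) k, ← Real.rpow_mul hLpos.le]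
    congr 1; ring
  have hLk : L ^ (-(k:ℝ)/2) = (Real.sqrt L ^ k)⁻¹ := by
    rw [hsqk, neg_div, Real.rpow_neg hLpos.le]
  have main : ∀ cc A : Fin k → ℝ, (∀ i, 0 < cc i) → (∀ i, 0 < A i) →
      (∀ i, A i * Real.exp (-(L * (cc i - lam i
          + lam i * (Real.log (lam i) - Real.log (cc i))))) / Real.sqrt L
        ≤ (L * cc i) ^ (mf i) * Real.exp (-(L * cc i)) / (Nat.factorial (mf i) : ℝ)) →
      (∑ i, (cc i - lam i + lam i * (Real.log (lam i) - Real.log (cc i)))) ≤ Dplus c₁ c₂ →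
      (∏ i, A i) * (n:ℝ) ^ (-(Dplus c₁ c₂)) * L ^ (-(k:ℝ)/2)
        ≤ mvPoisson (fun i => L * cc i) mf := by
    intro cc A hcc hA hb hKL
    have hrw : (n:ℝ) ^ (-(Dplus c₁ c₂)) = Real.exp (-(L * Dplus c₁ c₂)) := by
      rw [Real.rpow_def_of_pos hnpos, ← hLdef]
      congr 1; ring
    calc (∏ i, A i) * (n:ℝ) ^ (-(Dplus c₁ c₂)) * L ^ (-(k:ℝ)/2)
        ≤ (∏ i, A i) * Real.exp (-(L * ∑ i, (cc i - lam i
            + lam i * (Real.log (lam i) - Real.log (cc i))))) * L ^ (-(k:ℝ)/2) := by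
          rw [hrw]
          have hexp : Real.exp (-(L * Dplus c₁ c₂))
              ≤ Real.exp (-(L * ∑ i, (cc i - lam i
                + lam i * (Real.log (lam i) - Real.log (cc i))))) := by
            apply Real.exp_le_exp.mpr
            have := mul_le_mul_of_nonneg_left hKL hLpos.le
            linarith
          have h0 : (0:ℝ) ≤ L ^ (-(k:ℝ)/2) := Real.rpow_nonneg hLpos.le _
          exact mul_le_mul_of_nonneg_right
            (mul_le_mul_of_nonneg_left hexp (Finset.prod_nonneg fun i _ => (hA i).le)) h0
      _ = ∏ i, (A i * Real.exp (-(L * (cc i - lam i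
            + lam i * (Real.log (lam i) - Real.log (cc i))))) / Real.sqrt L) := by
          rw [Finset.prod_div_distrib, Finset.prod_mul_distrib, ← Real.exp_sum,
            Finset.prod_const, Finset.card_univ, Fintype.card_fin, hLk, div_eq_mul_inv]
          congr 2
          rw [Finset.mul_sum, ← Finset.sum_neg_distrib]
      _ ≤ ∏ i, ((L * cc i) ^ (mf i) * Real.exp (-(L * cc i)) / (Nat.factorial (mf i) : ℝ)) := by
          apply Finset.prod_le_prod
          · intro i _
            exact div_nonneg (mul_nonneg (hA i).le (Real.exp_pos _).le) (Real.sqrt_nonneg L)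
          · intro i _; exact hb i
      _ = mvPoisson (fun i => L * cc i) mf := by
          simp only [mvPoisson]
  have hmv₁ := main c₁ A₁ hc₁ hA₁ hb₁ hKL₁
  have hmv₂ := main c₂ A₂ hc₂ hA₂ hb₂ hKL₂
  -- nonnegativity and summability
  have hnn : ∀ (cc : Fin k → ℝ), (∀ i, 0 < cc i) →
      ∀ x, 0 ≤ mvPoisson (fun i => L * cc i) x := by
    intro cc hcc x
    simp only [mvPoisson]
    apply Finset.prod_nonneg
    intro i _
    have h1 : 0 < L * cc i := mul_pos hLpos (hcc i)
    positivity
  have hsummv : ∀ (cc : Fin k → ℝ), (∀ i, 0 < cc i) →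
      Summable (fun x : Fin k → ℕ => mvPoisson (fun i => L * cc i) x) := by
    intro cc hcc
    have h := summable_pi_prod k
      (fun i y => (L * cc i) ^ y * Real.exp (-(L * cc i)) / (Nat.factorial y : ℝ))
      (fun i => by
        have hsum : Summable (fun y : ℕ => (L * cc i) ^ y / (Nat.factorial y : ℝ)) :=
          Real.summable_pow_div_factorial _
        exact (hsum.mul_left (Real.exp (-(L * cc i)))).congr fun y => by ring)
      (fun i y => by
        have h1 : 0 < L * cc i := mul_pos hLpos (hcc i)
        positivity)
    exact h.congr fun x => by simp only [mvPoisson]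
  set f : (Fin k → ℕ) → ℝ := fun x =>
    min (mvPoisson (fun i => L * c₁ i) x * p₁) (mvPoisson (fun i => L * c₂ i) x * p₂)
    with hfdef
  have hfnn : ∀ x, 0 ≤ f x := fun x =>
    le_min (mul_nonneg (hnn c₁ hc₁ x) hp₁.le) (mul_nonneg (hnn c₂ hc₂ x) hp₂.le)
  have hfs : Summable f := by
    apply Summable.of_nonneg_of_le hfnn (fun x => min_le_left _ _)
    exact (hsummv c₁ hc₁).mul_right p₁
  have hle : f mf ≤ ∑' x, f x := Summable.le_tsum hfs mf fun b _ => hfnn b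
  refine le_trans ?_ hle
  rw [hfdef]
  apply le_min
  · calc min p₁ p₂ * min (∏ i, A₁ i) (∏ i, A₂ i) * (n:ℝ) ^ (-(Dplus c₁ c₂)) * L ^ (-(k:ℝ)/2)
        = (min p₁ p₂ * min (∏ i, A₁ i) (∏ i, A₂ i))
          * ((n:ℝ) ^ (-(Dplus c₁ c₂)) * L ^ (-(k:ℝ)/2)) := by ring
      _ ≤ (p₁ * ∏ i, A₁ i) * ((n:ℝ) ^ (-(Dplus c₁ c₂)) * L ^ (-(k:ℝ)/2)) := by
          apply mul_le_mul_of_nonneg_right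
          · exact mul_le_mul (min_le_left _ _) (min_le_left _ _)
              (le_min hprodA₁.le hprodA₂.le) hp₁.le
          · positivity
      _ = ((∏ i, A₁ i) * (n:ℝ) ^ (-(Dplus c₁ c₂)) * L ^ (-(k:ℝ)/2)) * p₁ := by ring
      _ ≤ mvPoisson (fun i => L * c₁ i) mf * p₁ := mul_le_mul_of_nonneg_right hmv₁ hp₁.le
  · calc min p₁ p₂ * min (∏ i, A₁ i) (∏ i, A₂ i) * (n:ℝ) ^ (-(Dplus c₁ c₂)) * L ^ (-(k:ℝ)/2)
        = (min p₁ p₂ * min (∏ i, A₁ i) (∏ i, A₂ i))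
          * ((n:ℝ) ^ (-(Dplus c₁ c₂)) * L ^ (-(k:ℝ)/2)) := by ring
      _ ≤ (p₂ * ∏ i, A₂ i) * ((n:ℝ) ^ (-(Dplus c₁ c₂)) * L ^ (-(k:ℝ)/2)) := by
          apply mul_le_mul_of_nonneg_right
          · exact mul_le_mul (min_le_right _ _) (min_le_right _ _)
              (le_min hprodA₁.le hprodA₂.le) hp₂.le
          · positivity
      _ = ((∏ i, A₂ i) * (n:ℝ) ^ (-(Dplus c₁ c₂)) * L ^ (-(k:ℝ)/2)) * p₂ := by ring
      _ ≤ mvPoisson (fun i => L * c₂ i) mf * p₂ := mul_le_mul_of_nonneg_right hmv₂ hp₂.le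
end

section
/- In the Bayesian k-ary hypothesis testing problem, the error probability P_e of the maximum a posteriori rule satisfies (1/(k−1)) ∑_{i<j} P_e(i,j) ≤ P_e ≤ ∑_{i<j} P_e(i,j). -/
open scoped BigOperators

lemma lemA {k : ℕ} (f : Fin k → ℝ) (hf : ∀ j, 0 ≤ f j) (m : Fin k)
    (hm : ∀ j, f j ≤ f m) :
    (∑ j, f j) - f m ≤ ∑ q ∈ Finset.univ.filter (fun q : Fin k × Fin k => q.1 < q.2),
      min (f q.1) (f q.2) := by
  classical
  set ι : Fin k → Fin k × Fin k := fun j => if j < m then (j, m) else (m, j) with hι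
  have h1 : (∑ j, f j) - f m = ∑ j ∈ Finset.univ.erase m, f j := by
    rw [← Finset.add_sum_erase _ f (Finset.mem_univ m)]; ring
  rw [h1]
  have hinj : ∀ a ∈ Finset.univ.erase m, ∀ b ∈ Finset.univ.erase m, ι a = ι b → a = b := by
    intro a ha b hb hab
    simp only [hι] at hab
    by_cases h1 : a < m <;> by_cases h2 : b < m <;> simp [h1, h2, Prod.ext_iff] at hab
    · exact hab
    · exact absurd hab.1 (ne_of_lt h1)
    · exact absurd hab.1.symm (ne_of_lt h2)
    · exact hab
  calc ∑ j ∈ Finset.univ.erase m, f j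
      = ∑ q ∈ (Finset.univ.erase m).image ι, min (f q.1) (f q.2) := by
        rw [Finset.sum_image hinj]
        refine Finset.sum_congr rfl fun j hj => ?_
        by_cases h : j < m <;> simp [hι, h, min_eq_left (hm j), min_eq_right (hm j)]
    _ ≤ ∑ q ∈ Finset.univ.filter (fun q : Fin k × Fin k => q.1 < q.2),
          min (f q.1) (f q.2) := by
        refine Finset.sum_le_sum_of_subset_of_nonneg ?_ (fun q _ _ => le_min (hf _) (hf _))
        intro q hq
        simp only [Finset.mem_image, Finset.mem_erase, Finset.mem_univ, and_true] at hq
        obtain ⟨j, hj, rfl⟩ := hq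
        by_cases h : j < m
        · simp [hι, h]
        · have : m < j := lt_of_le_of_ne (not_lt.mp h) (Ne.symm hj)
          simp [hι, h, this]


lemma lemB {k : ℕ} (hk : 2 ≤ k) (f : Fin k → ℝ) (hf : ∀ j, 0 ≤ f j) (m : Fin k)
    (hm : ∀ j, f j ≤ f m) :
    (∑ q ∈ Finset.univ.filter (fun q : Fin k × Fin k => q.1 < q.2),
      min (f q.1) (f q.2)) ≤ ((k : ℝ) - 1) * ((∑ j, f j) - f m) := by
  classical
  set Pr : Finset (Fin k × Fin k) := Finset.univ.filter (fun q : Fin k × Fin k => q.1 < q.2)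
    with hPr
  set σ : Fin k × Fin k → Fin k := fun q => if q.1 = m then q.2 else q.1 with hσ
  have step1 : (∑ q ∈ Pr, min (f q.1) (f q.2)) ≤ ∑ q ∈ Pr, f (σ q) := by
    refine Finset.sum_le_sum fun q hq => ?_
    by_cases h : q.1 = m <;> simp [hσ, h, min_le_left, min_le_right]
  refine step1.trans ?_
  rw [Finset.sum_comp f σ]
  have himg : Pr.image σ ⊆ Finset.univ.erase m := by
    intro l hl
    simp only [Finset.mem_image, hPr, Finset.mem_filter, Finset.mem_univ, true_and] at hl
    obtain ⟨q, hq, rfl⟩ := hl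
    simp only [Finset.mem_erase, Finset.mem_univ, and_true]
    by_cases h : q.1 = m
    · simp only [hσ, h, if_pos]
      exact fun hc => absurd (h ▸ hc ▸ hq) (lt_irrefl _)
    · simpa [hσ, h] using h
  have hcard : ∀ l : Fin k, ((Pr.filter fun q => σ q = l).card : ℝ) ≤ (k : ℝ) - 1 := by
    intro l
    have : (Pr.filter fun q => σ q = l).card ≤ (Finset.univ.erase l).card := by
      refine Finset.card_le_card_of_injOn (fun q => if q.1 = l then q.2 else q.1) ?_ ?_
      · intro q hq
        simp only [Finset.mem_coe, Finset.mem_filter, hPr, Finset.mem_univ, true_and] at hq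
        obtain ⟨hlt, hql⟩ := hq
        simp only [Finset.mem_coe, Finset.mem_erase, Finset.mem_univ, and_true]
        by_cases h : q.1 = l
        · simp only [if_pos h]
          exact fun hc => absurd (h ▸ hc ▸ hlt) (lt_irrefl _)
        · simpa [h] using h
      · intro q hq r hr hqr
        simp only [Finset.mem_coe, Finset.mem_filter, hPr, Finset.mem_univ, true_and] at hq hr
        obtain ⟨hqlt, hql⟩ := hq
        obtain ⟨hrlt, hrl⟩ := hr
        -- key: for s in fiber, either s.1 = l (and s.1 ≠ m), or (s.1 = m and s.2 = l)
        have key : ∀ s : Fin k × Fin k, s.1 < s.2 → σ s = l →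
            (s.1 = l ∧ s.1 ≠ m) ∨ (s.1 = m ∧ s.2 = l) := by
          intro s hslt hsl
          by_cases h : s.1 = m
          · right; exact ⟨h, by simpa [hσ, h] using hsl⟩
          · left; exact ⟨by simpa [hσ, h] using hsl, h⟩
        rcases key q hqlt hql with ⟨hq1, hq1m⟩ | ⟨hq1, hq2⟩ <;>
          rcases key r hrlt hrl with ⟨hr1, hr1m⟩ | ⟨hr1, hr2⟩
        · simp only [if_pos hq1, if_pos hr1] at hqr
          exact Prod.ext (hq1.trans hr1.symm) hqr
        · -- q.1 = l, r = (m, l): then φ q = q.2, φ r = r.1 = m (r.1 ≠ l since r.1=m... need m ≠ l)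
          have hml : r.1 ≠ l := fun hc => absurd (hc ▸ hr2 ▸ hrlt) (lt_irrefl _)
          simp only [if_pos hq1, if_neg hml] at hqr
          -- q.2 = r.1 = m, q.1 = l < q.2 = m; r.1 = m < r.2 = l : l < m < l contradiction
          exfalso
          have h1 : (l : Fin k) < m := by rw [← hq1, ← hr1, ← hqr]; exact hqlt
          have h2 : m < l := hr1 ▸ hr2 ▸ hrlt
          exact absurd (h1.trans h2) (lt_irrefl _)
        · have hml : q.1 ≠ l := fun hc => absurd (hc ▸ hq2 ▸ hqlt) (lt_irrefl _)
          simp only [if_neg hml, if_pos hr1] at hqr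
          exfalso
          have h1 : (l : Fin k) < m := by rw [← hr1, ← hq1, hqr]; exact hrlt
          have h2 : m < l := hq1 ▸ hq2 ▸ hqlt
          exact absurd (h1.trans h2) (lt_irrefl _)
        · have hq1l : q.1 ≠ l := fun hc => absurd (hc ▸ hq2 ▸ hqlt) (lt_irrefl _)
          have hr1l : r.1 ≠ l := fun hc => absurd (hc ▸ hr2 ▸ hrlt) (lt_irrefl _)
          simp only [if_neg hq1l, if_neg hr1l] at hqr
          exact Prod.ext hqr (hq2.trans hr2.symm)
    calc ((Pr.filter fun q => σ q = l).card : ℝ) ≤ ((Finset.univ.erase l).card : ℝ) := by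
          exact_mod_cast this
      _ = (k : ℝ) - 1 := by
          rw [Finset.card_erase_of_mem (Finset.mem_univ l)]
          simp only [Finset.card_univ, Fintype.card_fin]
          rw [Nat.cast_sub (by omega)]
          norm_num
  have step3 : (∑ l ∈ Pr.image σ, (Pr.filter fun q => σ q = l).card • f l)
      ≤ ∑ l ∈ Pr.image σ, ((k : ℝ) - 1) * f l := by
    refine Finset.sum_le_sum fun l _ => ?_
    rw [nsmul_eq_mul]
    exact mul_le_mul_of_nonneg_right (hcard l) (hf l)
  refine step3.trans ?_
  rw [← Finset.mul_sum]
  have hk1 : (0:ℝ) ≤ (k : ℝ) - 1 := by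
    have : (2:ℝ) ≤ (k:ℝ) := by exact_mod_cast hk
    linarith
  refine mul_le_mul_of_nonneg_left ?_ hk1
  calc ∑ l ∈ Pr.image σ, f l ≤ ∑ l ∈ Finset.univ.erase m, f l :=
        Finset.sum_le_sum_of_subset_of_nonneg himg (fun l _ _ => hf l)
    _ = (∑ j, f j) - f m := by
        rw [← Finset.add_sum_erase _ f (Finset.mem_univ m)]; ring

/-- In the Bayesian `k`-ary hypothesis testing problem with prior `p` and conditional
pmfs `P j` on a countable observation space `𝒳`, the error probability
`P_e = 1 - ∑_x max_j p_j P_j(x)` of the MAP rule satisfies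
`(1/(k-1)) ∑_{i<j} P_e(i,j) ≤ P_e ≤ ∑_{i<j} P_e(i,j)`, where
`P_e(i,j) = ∑_x min{p_i P_i(x), p_j P_j(x)}`. -/
theorem map_error_pairwise_bounds (k : ℕ) (hk : 2 ≤ k) (𝒳 : Type*) [Countable 𝒳]
    (p : Fin k → ℝ) (hp0 : ∀ j, 0 ≤ p j) (hp1 : ∑ j, p j = 1)
    (P : Fin k → 𝒳 → ℝ) (hP0 : ∀ j x, 0 ≤ P j x) (hP1 : ∀ j, ∑' x, P j x = 1) :
    (1 / ((k : ℝ) - 1)) *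
        (∑ q ∈ Finset.univ.filter (fun q : Fin k × Fin k => q.1 < q.2),
          ∑' x, min (p q.1 * P q.1 x) (p q.2 * P q.2 x))
      ≤ 1 - ∑' x, ⨆ j, p j * P j x ∧
    1 - ∑' x, ⨆ j, p j * P j x
      ≤ ∑ q ∈ Finset.univ.filter (fun q : Fin k × Fin k => q.1 < q.2),
          ∑' x, min (p q.1 * P q.1 x) (p q.2 * P q.2 x) := by
  classical
  haveI : NeZero k := ⟨by omega⟩
  set F : Fin k → 𝒳 → ℝ := fun j x => p j * P j x with hF
  have hF0 : ∀ j x, 0 ≤ F j x := fun j x => mul_nonneg (hp0 j) (hP0 j x)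
  have hPsum : ∀ j, Summable (P j) := by
    intro j
    by_contra h
    have h1 := hP1 j
    rw [tsum_eq_zero_of_not_summable h] at h1
    exact one_ne_zero h1.symm
  have hFsum : ∀ j, Summable (F j) := fun j => (hPsum j).mul_left (p j)
  have hFtsum : ∀ j, ∑' x, F j x = p j := by
    intro j; rw [hF]; simp only; rw [tsum_mul_left, hP1 j, mul_one]
  set S : 𝒳 → ℝ := fun x => ∑ j, F j x with hS
  have hSsum : Summable S := summable_sum (fun j _ => hFsum j)
  have hStsum : ∑' x, S x = 1 := by
    rw [hS]
    rw [Summable.tsum_finsetSum (fun j _ => hFsum j)]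
    simp only [hFtsum]
    exact hp1
  -- the sup
  have hbdd : ∀ x, BddAbove (Set.range fun j => F j x) :=
    fun x => (Set.finite_range _).bddAbove
  have hMle : ∀ x, (⨆ j, F j x) ≤ S x := by
    intro x
    exact ciSup_le fun j => Finset.single_le_sum (fun i _ => hF0 i x) (Finset.mem_univ j)
  have hM0 : ∀ x, 0 ≤ ⨆ j, F j x := by
    intro x
    exact le_trans (hF0 0 x) (le_ciSup (hbdd x) 0)
  have hMsum : Summable (fun x => ⨆ j, F j x) :=
    Summable.of_nonneg_of_le hM0 hMle hSsum
  -- pointwise max attained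
  have hmax : ∀ x, ∃ m : Fin k, (∀ j, F j x ≤ F m x) ∧ (⨆ j, F j x) = F m x := by
    intro x
    obtain ⟨m, hm⟩ := Finite.exists_max (fun j => F j x)
    exact ⟨m, hm, le_antisymm (ciSup_le hm) (le_ciSup (hbdd x) m)⟩
  -- min summable
  have hminsum : ∀ q : Fin k × Fin k,
      Summable (fun x => min (F q.1 x) (F q.2 x)) := by
    intro q
    exact Summable.of_nonneg_of_le (fun x => le_min (hF0 _ _) (hF0 _ _))
      (fun x => min_le_left _ _) (hFsum q.1)
  have hpairsum : Summable (fun x => ∑ q ∈ Finset.univ.filter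
      (fun q : Fin k × Fin k => q.1 < q.2), min (F q.1 x) (F q.2 x)) :=
    summable_sum (fun q _ => hminsum q)
  -- swap sums
  have hswap : (∑ q ∈ Finset.univ.filter (fun q : Fin k × Fin k => q.1 < q.2),
        ∑' x, min (p q.1 * P q.1 x) (p q.2 * P q.2 x))
      = ∑' x, ∑ q ∈ Finset.univ.filter (fun q : Fin k × Fin k => q.1 < q.2),
          min (F q.1 x) (F q.2 x) := by
    rw [Summable.tsum_finsetSum (fun q _ => hminsum q)]
  -- error as tsum
  have herr : 1 - (∑' x, ⨆ j, p j * P j x) = ∑' x, (S x - ⨆ j, F j x) := by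
    rw [Summable.tsum_sub hSsum hMsum, hStsum]
  have hk1 : (0:ℝ) < (k : ℝ) - 1 := by
    have : (2:ℝ) ≤ (k:ℝ) := by exact_mod_cast hk
    linarith
  constructor
  · rw [herr, hswap, div_mul_eq_mul_div, one_mul, div_le_iff₀ hk1]
    rw [mul_comm, ← tsum_mul_left]
    refine Summable.tsum_le_tsum ?_ hpairsum (hMsum.sub hSsum |>.neg.congr (fun x => by ring) |>.mul_left _ |>.congr (fun x => rfl))
    intro x
    obtain ⟨m, hm, hMeq⟩ := hmax x
    rw [hMeq]
    exact lemB hk (fun j => F j x) (fun j => hF0 j x) m hm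
  · rw [herr, hswap]
    refine Summable.tsum_le_tsum ?_ (hSsum.sub hMsum) hpairsum
    intro x
    obtain ⟨m, hm, hMeq⟩ := hmax x
    rw [hMeq]
    exact lemA (fun j => F j x) (fun j => hF0 j x) m hm
end

section
/- Let k ≥ 2 and a, b > 0. Consider the symmetric stochastic block model parameters p_i = 1/k for all i ∈ [k], Q_{i,j} = a if i = j and Q_{i,j} = b if i ≠ j, and P = diag(p), so that the j-th community profile (PQ)_j ∈ (0,∞)^k has entry a/k in coordinate j and b/k in every other coordinate. Then for every i ≠ j, D₊((PQ)_i, (PQ)_j) = (√a − √b)²/k; consequently min_{i≠j} D₊((PQ)_i,(PQ)_j) ≥ 1 if and only if |√a − √b| ≥ √k. -/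
open scoped BigOperators

/-- The `j`-th community profile `(PQ)_j` in the symmetric stochastic block model with `k`
communities, within-community probability `a` and between-community probability `b`:
entry `a/k` in coordinate `j` and `b/k` elsewhere. -/
noncomputable def communityProfile (k : ℕ) (a b : ℝ) (j : Fin k) : Fin k → ℝ :=
  fun i => if i = j then a / k else b / k

lemma dplus_formula (k : ℕ) (hk : 2 ≤ k) (a b : ℝ) (ha : 0 < a) (hb : 0 < b)
    (i j : Fin k) (hij : i ≠ j) :
    Dplus (communityProfile k a b i) (communityProfile k a b j)
      = (Real.sqrt a - Real.sqrt b) ^ 2 / k := by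
  have hk0 : (0 : ℝ) < k := by
    have : (2 : ℝ) ≤ k := by exact_mod_cast hk
    linarith
  set x : ℝ := a / k with hxdef
  set y : ℝ := b / k with hydef
  have hx : 0 < x := div_pos ha hk0
  have hy : 0 < y := div_pos hb hk0
  set M : ℝ := (Real.sqrt a - Real.sqrt b) ^ 2 / k with hM
  have cii : communityProfile k a b i i = x := by simp [communityProfile, hxdef]
  have cji : communityProfile k a b j i = y := by simp [communityProfile, hij, hydef]
  have cij : communityProfile k a b i j = y := by simp [communityProfile, hij.symm, hydef]
  have cjj : communityProfile k a b j j = x := by simp [communityProfile, hxdef]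
  -- the sum simplifies
  have hsum : ∀ t : ℝ,
      (∑ m, (t * communityProfile k a b i m + (1 - t) * communityProfile k a b j m -
        communityProfile k a b i m ^ t * communityProfile k a b j m ^ (1 - t)))
      = x + y - (x ^ t * y ^ (1 - t) + y ^ t * x ^ (1 - t)) := by
    intro t
    rw [Finset.sum_eq_add_of_mem i j (Finset.mem_univ i) (Finset.mem_univ j) hij
      (fun c _ hc => ?_)]
    · rw [cii, cji, cij, cjj]; ring
    · simp only [communityProfile, if_neg hc.1, if_neg hc.2]
      have h1 : t + (1 - t) = 1 := by ring
      rw [← hydef, ← Real.rpow_add hy, h1, Real.rpow_one]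
      ring
  have hsa : Real.sqrt a ^ 2 = a := Real.sq_sqrt ha.le
  have hsb : Real.sqrt b ^ 2 = b := Real.sq_sqrt hb.le
  have hsk : Real.sqrt k * Real.sqrt k = (k : ℝ) := Real.mul_self_sqrt hk0.le
  have h1 : Real.sqrt x * Real.sqrt y = Real.sqrt a * Real.sqrt b / k := by
    rw [hxdef, hydef, Real.sqrt_div ha.le, Real.sqrt_div hb.le, div_mul_div_comm, hsk]
  have hMxy : M = x + y - 2 * (Real.sqrt x * Real.sqrt y) := by
    rw [hM, h1, hxdef, hydef, sub_sq, hsa, hsb]; ring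
  have hub : ∀ t : ℝ, x + y - (x ^ t * y ^ (1 - t) + y ^ t * x ^ (1 - t)) ≤ M := by
    intro t
    set u := x ^ t * y ^ (1 - t) with hu_def
    set v := y ^ t * x ^ (1 - t) with hv_def
    have hu : 0 < u := mul_pos (Real.rpow_pos_of_pos hx t) (Real.rpow_pos_of_pos hy _)
    have hv : 0 < v := mul_pos (Real.rpow_pos_of_pos hy t) (Real.rpow_pos_of_pos hx _)
    have h1t : t + (1 - t) = 1 := by ring
    have huv : u * v = x * y := by
      rw [hu_def, hv_def,
        show x ^ t * y ^ (1 - t) * (y ^ t * x ^ (1 - t))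
          = x ^ t * x ^ (1 - t) * (y ^ t * y ^ (1 - t)) by ring,
        ← Real.rpow_add hx, ← Real.rpow_add hy, h1t, Real.rpow_one, Real.rpow_one]
    have e : Real.sqrt u * Real.sqrt v = Real.sqrt x * Real.sqrt y := by
      rw [← Real.sqrt_mul hu.le, huv, Real.sqrt_mul hx.le]
    have key : 2 * (Real.sqrt x * Real.sqrt y) ≤ u + v := by
      nlinarith [sq_nonneg (Real.sqrt u - Real.sqrt v), Real.sq_sqrt hu.le,
        Real.sq_sqrt hv.le, e]
    rw [hMxy]; linarith
  have hhalf : x ^ (1/2 : ℝ) * y ^ (1 - 1/2 : ℝ) + y ^ (1/2 : ℝ) * x ^ (1 - 1/2 : ℝ)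
      = 2 * (Real.sqrt x * Real.sqrt y) := by
    have e2 : (1 - 1/2 : ℝ) = 1/2 := by norm_num
    rw [e2, Real.sqrt_eq_rpow, Real.sqrt_eq_rpow]
    ring
  have hne : ((fun t : ℝ => ∑ m, (t * communityProfile k a b i m
      + (1 - t) * communityProfile k a b j m - communityProfile k a b i m ^ t
        * communityProfile k a b j m ^ (1 - t))) '' Set.Icc (0:ℝ) 1).Nonempty :=
    Set.Nonempty.image _ (Set.nonempty_Icc.mpr (by norm_num))
  have hmem : M ∈ ((fun t : ℝ => ∑ m, (t * communityProfile k a b i m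
      + (1 - t) * communityProfile k a b j m - communityProfile k a b i m ^ t
        * communityProfile k a b j m ^ (1 - t))) '' Set.Icc (0:ℝ) 1) := by
    refine ⟨1/2, by norm_num, ?_⟩
    simp only
    rw [hsum (1/2), hhalf, ← hMxy]
  have hbdd : BddAbove ((fun t : ℝ => ∑ m, (t * communityProfile k a b i m
      + (1 - t) * communityProfile k a b j m - communityProfile k a b i m ^ t
        * communityProfile k a b j m ^ (1 - t))) '' Set.Icc (0:ℝ) 1) := by
    refine ⟨M, ?_⟩
    rintro z ⟨t, _, rfl⟩
    simp only
    rw [hsum t]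
    exact hub t
  refine le_antisymm (csSup_le hne ?_) (le_csSup hbdd hmem)
  rintro z ⟨t, _, rfl⟩
  simp only
  rw [hsum t]
  exact hub t

/-- In the symmetric SBM with `k` communities, for all `i ≠ j` the CH-divergence of the
community profiles equals `(√a - √b)²/k`; consequently
`min_{i≠j} D₊((PQ)_i,(PQ)_j) ≥ 1` if and only if `|√a - √b| ≥ √k`. -/
theorem symmetric_sbm_chernoff_hellinger (k : ℕ) (hk : 2 ≤ k) (a b : ℝ)
    (ha : 0 < a) (hb : 0 < b) :
    (∀ i j : Fin k, i ≠ j →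
      Dplus (communityProfile k a b i) (communityProfile k a b j)
        = (Real.sqrt a - Real.sqrt b) ^ 2 / k) ∧
    ((∀ i j : Fin k, i ≠ j →
        1 ≤ Dplus (communityProfile k a b i) (communityProfile k a b j)) ↔
      Real.sqrt k ≤ |Real.sqrt a - Real.sqrt b|) := by
  have hk0 : (0 : ℝ) < k := by
    have : (2 : ℝ) ≤ k := by exact_mod_cast hk
    linarith
  refine ⟨fun i j hij => dplus_formula k hk a b ha hb i j hij, ?_⟩
  constructor
  · intro h
    have hne : (⟨0, by omega⟩ : Fin k) ≠ ⟨1, by omega⟩ :=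
      Fin.ne_of_val_ne (by norm_num)
    have h1 := h _ _ hne
    rw [dplus_formula k hk a b ha hb _ _ hne] at h1
    have hksq : (k : ℝ) ≤ (Real.sqrt a - Real.sqrt b) ^ 2 := (one_le_div hk0).mp h1
    calc Real.sqrt k ≤ Real.sqrt ((Real.sqrt a - Real.sqrt b) ^ 2) :=
          Real.sqrt_le_sqrt hksq
      _ = |Real.sqrt a - Real.sqrt b| := Real.sqrt_sq_eq_abs _
  · intro h i j hij
    rw [dplus_formula k hk a b ha hb i j hij]
    have hksq : (k : ℝ) ≤ (Real.sqrt a - Real.sqrt b) ^ 2 := by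
      nlinarith [Real.sq_sqrt hk0.le, sq_abs (Real.sqrt a - Real.sqrt b),
        Real.sqrt_nonneg (k : ℝ), h]
    exact (one_le_div hk0).mpr hksq
end
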